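/- Let A and H be n×n Hermitian complex matrices and let p be a polynomial with real coefficients. Then the function t ↦ Re Tr(p(A + t·H)) (where p is evaluated at a matrix via the canonical ℝ-algebra map from polynomials to n×n complex matrices) is differentiable at t = 0 with derivative Re Tr(p'(A) · H), where p' denotes the formal derivative of p. -/

import Mathlib

open Matrix Polynomial Finset

attribute [local instance] Matrix.linftyOpNormedRing Matrix.linftyOpNormedAlgebra

section aux

variable {n : ℕ} (A H : Matrix (Fin n) (Fin n) ℂ)

private lemma line_deriv : HasDerivAt (fun t : ℝ => A + t • H) H 0 := by
  have h := ((hasDerivAt_id (0:ℝ)).smul_const H).const_add A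
  rw [one_smul] at h
  exact h

private lemma line_pow_deriv (k : ℕ) :
    HasDerivAt (fun t : ℝ => (A + t • H) ^ k)
      (∑ i ∈ range k, A ^ i * H * A ^ (k - 1 - i)) 0 := by
  induction k with
  | zero => simp only [pow_zero, Finset.range_zero, Finset.sum_empty]; exact hasDerivAt_const _ _
  | succ k ih =>
    have h := ((line_deriv A H).mul ih)
    simp only [zero_smul, add_zero] at h
    have hf : (fun t : ℝ => (A + t • H) ^ (k + 1))
        = fun t : ℝ => (A + t • H) * (A + t • H) ^ k := by
      funext t; rw [pow_succ']
    rw [hf]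
    refine HasDerivAt.congr_deriv h ?_
    symm
    rw [Finset.sum_range_succ', Finset.mul_sum]
    simp only [pow_zero, mul_one, pow_succ, Nat.succ_sub_one]
    rw [add_comm]
    congr 1
    · simp
    · apply Finset.sum_congr rfl
      intro i hi
      rw [← pow_succ, ← mul_assoc, ← mul_assoc, ← pow_succ', Nat.sub_sub, add_comm 1 i]

private lemma trace_clm_cont : Continuous (fun M : Matrix (Fin n) (Fin n) ℂ => M.trace) :=
  LinearMap.continuous_of_finiteDimensional (Matrix.traceLinearMap (Fin n) ℝ ℂ)

private lemma trace_pow_deriv (k : ℕ) :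
    HasDerivAt (fun t : ℝ => ((A + t • H) ^ k).trace)
      ((k : ℂ) * (A ^ (k - 1) * H).trace) 0 := by
  have h := ((LinearMap.toContinuousLinearMap
      (Matrix.traceLinearMap (Fin n) ℝ ℂ)).hasFDerivAt).comp_hasDerivAt 0 (line_pow_deriv A H k)
  refine HasDerivAt.congr_deriv h ?_
  symm
  show (k : ℂ) * (A ^ (k - 1) * H).trace = (∑ i ∈ Finset.range k, A ^ i * H * A ^ (k - 1 - i)).trace
  rw [Matrix.trace_sum]
  have : ∀ i ∈ Finset.range k, (A ^ i * H * A ^ (k - 1 - i)).trace = (A ^ (k - 1) * H).trace := by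
    intro i hi
    have hik : i < k := Finset.mem_range.mp hi
    rw [Matrix.trace_mul_cycle, ← pow_add]
    have : k - 1 - i + i = k - 1 := by omega
    rw [this]
  rw [Finset.sum_congr rfl this, Finset.sum_const, Finset.card_range, nsmul_eq_mul]

private lemma trace_poly_deriv (p : Polynomial ℝ) :
    HasDerivAt (fun t : ℝ => ((Polynomial.aeval (A + t • H)) p).trace)
      (((Polynomial.aeval A) (Polynomial.derivative p)) * H).trace 0 := by
  induction p using Polynomial.induction_on' with
  | add p q hp hq =>
    have h := hp.add hq
    simp [mul_add, add_mul] at h ⊢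
    exact h
  | monomial k a =>
    have h := (trace_pow_deriv A H k).const_smul a
    have hfun : ∀ M : Matrix (Fin n) (Fin n) ℂ,
        ((Polynomial.aeval M) (Polynomial.monomial k a)).trace = a • (M ^ k).trace := by
      intro M
      rw [Polynomial.aeval_monomial, ← Algebra.smul_def, Matrix.trace_smul]
    have hval : ((Polynomial.aeval A) (Polynomial.derivative (Polynomial.monomial k a)) * H).trace
        = a • ((k : ℂ) * (A ^ (k - 1) * H).trace) := by
      rw [Polynomial.derivative_monomial, Polynomial.aeval_monomial, ← Algebra.smul_def,
        Matrix.smul_mul, Matrix.trace_smul]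
      simp [Complex.real_smul]
      ring
    simp only [hfun]
    rw [hval]
    exact h
end aux

/-- **Derivative of a polynomial trace functional along a Hermitian direction**
(Proposition 24 of the paper): for Hermitian matrices `A, H` and a real polynomial `p`,
the map `t ↦ Re Tr p(A + t·H)` is differentiable at `t = 0` with derivative
`Re Tr(p'(A)·H)`. -/
theorem stmt12 {n : ℕ} (A H : Matrix (Fin n) (Fin n) ℂ)
    (hA : A.IsHermitian) (hH : H.IsHermitian) (p : Polynomial ℝ) :
    HasDerivAt (fun t : ℝ => (((aeval (A + t • H)) p).trace).re)
      ((((aeval A) (derivative p)) * H).trace.re) 0 := by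
  exact (Complex.reCLM.hasFDerivAt).comp_hasDerivAt 0 (trace_poly_deriv A H p)
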